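/- arXiv:2212.05727 — 2 statements merged into one kernel-verified Lean document; each statement's English description precedes it below -/
import Mathlib

section
/- Let X be a nonempty type and f, g : X → ℝ. Define the Lagrangian L(x, λ) = f(x) + λ·g(x) and, for κ ≥ 0, the penalized objective ℓ(x) = f(x) + κ·max(0, g(x)). Suppose (x*, λ*) with λ* ≥ 0 is a saddle point of L, i.e., L(x*, λ) ≤ L(x*, λ*) ≤ L(x, λ*) for all x ∈ X and all λ ≥ 0. If κ ≥ λ*, then x* is a global minimizer of ℓ, i.e., ℓ(x*) ≤ ℓ(x) for all x ∈ X, and moreover ℓ(x*) = L(x*, λ*) = f(x*). -/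
/-- Proposition 2 (exact penalty): if `(x*, λ*)` with `λ* ≥ 0` is a saddle
point of the Lagrangian `L(x, λ) = f(x) + λ·g(x)` and the penalty factor
satisfies `κ ≥ λ*`, then `x*` globally minimizes the penalized objective
`ℓ(x) = f(x) + κ·max(0, g(x))`, and `ℓ(x*) = L(x*, λ*) = f(x*)`. -/
theorem exact_penalty_saddle_point
    {X : Type*} [Nonempty X] (f g : X → ℝ) (κ : ℝ) (hκ : 0 ≤ κ)
    (xs : X) (ls : ℝ) (hls : 0 ≤ ls)
    (hsaddle₁ : ∀ l : ℝ, 0 ≤ l → f xs + l * g xs ≤ f xs + ls * g xs)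
    (hsaddle₂ : ∀ x : X, f xs + ls * g xs ≤ f x + ls * g x)
    (hκls : ls ≤ κ) :
    (∀ x : X, f xs + κ * max 0 (g xs) ≤ f x + κ * max 0 (g x)) ∧
      f xs + κ * max 0 (g xs) = f xs + ls * g xs ∧
      f xs + ls * g xs = f xs := by
  have hg : g xs ≤ 0 := by
    have := hsaddle₁ (ls + 1) (by linarith)
    nlinarith
  have hzero : ls * g xs = 0 := by
    have h0 := hsaddle₁ 0 le_rfl
    nlinarith [mul_nonpos_of_nonneg_of_nonpos hls hg]
  have hmax : max 0 (g xs) = 0 := max_eq_left hg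
  refine ⟨fun x => ?_, by rw [hmax, hzero]; ring, by rw [hzero]; ring⟩
  have h2 := hsaddle₂ x
  have : ls * g x ≤ κ * max 0 (g x) := by
    rcases le_or_gt (g x) 0 with h | h
    · calc ls * g x ≤ 0 := mul_nonpos_of_nonneg_of_nonpos hls h
        _ ≤ κ * max 0 (g x) := mul_nonneg hκ (le_max_left _ _)
    · rw [max_eq_right h.le]
      exact mul_le_mul_of_nonneg_right hκls h.le
  rw [hmax, hzero] at *
  linarith
end

section
/- Let X be a nonempty type and f, g : X → ℝ, with Lagrangian L(x, λ) = f(x) + λ·g(x) and, for κ ≥ 0, penalized objective ℓ(x) = f(x) + κ·max(0, g(x)). Suppose (x*, λ*) with λ* ≥ 0 is a saddle point of L (L(x*, λ) ≤ L(x*, λ*) ≤ L(x, λ*) for all x and all λ ≥ 0) and κ ≥ λ*. Then the optimal values coincide: ⨅_{x ∈ X} ℓ(x) = L(x*, λ*) = f(x*), and the infimum of ℓ is attained at x*. -/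
/-- Value-equality form of Proposition 2: with a saddle point `(x*, λ*)` of
the Lagrangian and a penalty factor `κ ≥ λ*`, the optimal value of the
exact-penalty problem equals `L(x*, λ*) = f(x*)` and is attained at `x*`. -/
theorem exact_penalty_value_equality
    {X : Type*} [Nonempty X] (f g : X → ℝ) (κ : ℝ) (hκ : 0 ≤ κ)
    (xs : X) (ls : ℝ) (hls : 0 ≤ ls)
    (hsaddle₁ : ∀ l : ℝ, 0 ≤ l → f xs + l * g xs ≤ f xs + ls * g xs)
    (hsaddle₂ : ∀ x : X, f xs + ls * g xs ≤ f x + ls * g x)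
    (hκls : ls ≤ κ) :
    (⨅ x : X, f x + κ * max 0 (g x)) = f xs + ls * g xs ∧
      f xs + ls * g xs = f xs ∧
      f xs + κ * max 0 (g xs) = ⨅ x : X, f x + κ * max 0 (g x) := by
  have hg : g xs ≤ 0 := by
    have := hsaddle₁ (ls + 1) (by linarith)
    nlinarith
  have hlg : ls * g xs = 0 := by
    have h0 := hsaddle₁ 0 le_rfl
    nlinarith [mul_nonpos_of_nonneg_of_nonpos hls hg]
  have hmax : max 0 (g xs) = 0 := max_eq_left hg
  have hlow : ∀ x : X, f xs ≤ f x + κ * max 0 (g x) := by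
    intro x
    have h2 := hsaddle₂ x
    have : ls * g x ≤ κ * max 0 (g x) := by
      rcases le_or_gt (g x) 0 with h | h
      · rw [max_eq_left h]
        nlinarith [mul_nonpos_of_nonneg_of_nonpos hls h]
      · rw [max_eq_right h.le]
        nlinarith
    nlinarith
  have hinf : (⨅ x : X, f x + κ * max 0 (g x)) = f xs := by
    apply le_antisymm
    · have : f xs + κ * max 0 (g xs) = f xs := by rw [hmax]; ring
      calc (⨅ x : X, f x + κ * max 0 (g x)) ≤ f xs + κ * max 0 (g xs) :=
            ciInf_le ⟨f xs, fun y ⟨x, hx⟩ => hx ▸ hlow x⟩ xs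
        _ = f xs := this
    · exact le_ciInf hlow
  refine ⟨by rw [hinf, hlg]; ring, by rw [hlg]; ring, by rw [hinf, hmax]; ring⟩
end
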